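/- Let σ be a C^{1,1} hypersurface measure on ℝ³. Then there exists a constant C such that for every λ ∈ ℂ with Im λ > 0 and all f, g ∈ L²(σ), the double integral ∬ (4π|x−y|)^{−1} e^{iλ|x−y|} f(y) \overline{g(x)} dσ(y) dσ(x) converges absolutely and satisfies |∬ (4π|x−y|)^{−1} e^{iλ|x−y|} f(y) \overline{g(x)} dσ(y) dσ(x)| ≤ C (2+(Im λ)²)^{−1/2} ‖f‖_{L²(σ)} ‖g‖_{L²(σ)}. (This is Theorem 1.3 of the paper in dimension 3, where the free Green's kernel for Im λ > 0 is explicitly e^{iλ|x−y|}/(4π|x−y|).) -/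

import Mathlib

open MeasureTheory Metric

noncomputable section

/-- Embed `(x', s) ∈ ℝ^{n} × ℝ` as a point of `ℝ^{n+1}`. -/
def snocE {n : ℕ} (x : EuclideanSpace ℝ (Fin n)) (s : ℝ) : EuclideanSpace ℝ (Fin (n + 1)) :=
  (EuclideanSpace.equiv (Fin (n + 1)) ℝ).symm
    (Fin.snoc (EuclideanSpace.equiv (Fin n) ℝ x) s)

/-- A `C^{1,1}` graph measure on `ℝ^{n+1}`: the pushforward under `x' ↦ (x', F x')` of
`√(1+|∇F|²) dx'` restricted to a compact set `K`, where `∇F` is Lipschitz. -/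
def IsC11GraphMeasure {n : ℕ} (σ : Measure (EuclideanSpace ℝ (Fin (n + 1)))) : Prop :=
  ∃ (F : EuclideanSpace ℝ (Fin n) → ℝ)
    (F' : EuclideanSpace ℝ (Fin n) → (EuclideanSpace ℝ (Fin n) →L[ℝ] ℝ))
    (K : Set (EuclideanSpace ℝ (Fin n))) (L : NNReal),
    IsCompact K ∧ (∀ x, HasFDerivAt F (F' x) x) ∧ LipschitzWith L F' ∧
    σ = Measure.map (fun x => snocE x (F x))
      ((volume.restrict K).withDensity
        (fun x => ENNReal.ofReal (Real.sqrt (1 + ‖F' x‖ ^ 2))))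

/-- A `C^{1,1}` hypersurface measure: a finite sum of images of `C^{1,1}` graph measures
under affine isometries of `ℝ^{n+1}`. -/
def IsC11HypersurfaceMeasure {n : ℕ} (σ : Measure (EuclideanSpace ℝ (Fin (n + 1)))) : Prop :=
  ∃ (m : ℕ)
    (A : Fin m → (EuclideanSpace ℝ (Fin (n + 1)) →ᵃⁱ[ℝ] EuclideanSpace ℝ (Fin (n + 1))))
    (σs : Fin m → Measure (EuclideanSpace ℝ (Fin (n + 1)))),
    (∀ i, IsC11GraphMeasure (σs i)) ∧ σ = ∑ i, Measure.map (A i) (σs i)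

/-- The (closed) support of a measure on a metric space. -/
def measSupport {E : Type*} [MeasurableSpace E] [PseudoMetricSpace E] (σ : Measure E) :
    Set E :=
  {x | ∀ r > 0, σ (Metric.ball x r) ≠ 0}

/-- The `L²(σ)` norm of a function. -/
def L2norm {E : Type*} [MeasurableSpace E] (σ : Measure E) (f : E → ℂ) : ℝ :=
  Real.sqrt (∫ x, ‖f x‖ ^ 2 ∂σ)

/-- Japanese bracket `⟨λ⟩ = (2 + |λ|²)^{1/2}` of a complex number. -/
def jbC (z : ℂ) : ℝ := Real.sqrt (2 + ‖z‖ ^ 2)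

/-- The analytically continued free Green's kernel in dimension 3,
`G₀(λ,x,y) = e^{iλ|x−y|}/(4π|x−y|)`, multiplied by `f(y) conj (g(x))`. -/
def greenIntegrand3 (lam : ℂ) (f g : EuclideanSpace ℝ (Fin 3) → ℂ)
    (p : EuclideanSpace ℝ (Fin 3) × EuclideanSpace ℝ (Fin 3)) : ℂ :=
  ((4 * Real.pi * ‖p.1 - p.2‖ : ℝ) : ℂ)⁻¹ *
    Complex.exp (Complex.I * lam * (‖p.1 - p.2‖ : ℝ)) * f p.2 * (starRingEnd ℂ) (g p.1)


-- ======================= auxiliary development =======================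
open Filter Real Set

abbrev E3 := EuclideanSpace ℝ (Fin 3)

def projE {n : ℕ} (u : EuclideanSpace ℝ (Fin (n + 1))) : EuclideanSpace ℝ (Fin n) :=
  (EuclideanSpace.equiv (Fin n) ℝ).symm (fun i => u i.castSucc)

lemma snocE_castSucc {n : ℕ} (x : EuclideanSpace ℝ (Fin n)) (s : ℝ) (i : Fin n) :
    snocE x s i.castSucc = x i := by
  simp [snocE, Fin.snoc_castSucc]

lemma snocE_last {n : ℕ} (x : EuclideanSpace ℝ (Fin n)) (s : ℝ) :
    snocE x s (Fin.last n) = s := by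
  simp [snocE, Fin.snoc_last]

lemma norm_snocE_sq {n : ℕ} (x : EuclideanSpace ℝ (Fin n)) (s : ℝ) :
    ‖snocE x s‖ ^ 2 = ‖x‖ ^ 2 + s ^ 2 := by
  simp only [EuclideanSpace.norm_eq]
  rw [Real.sq_sqrt (by positivity), Real.sq_sqrt (by positivity)]
  rw [Fin.sum_univ_castSucc]
  simp [snocE_castSucc, snocE_last, sq_abs]

lemma snocE_sub {n : ℕ} (x y : EuclideanSpace ℝ (Fin n)) (s t : ℝ) :
    snocE x s - snocE y t = snocE (x - y) (s - t) := by
  ext i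
  induction i using Fin.lastCases with
  | last => simp [snocE_last]
  | cast j => simp [snocE_castSucc]

lemma norm_sub_le_norm_snocE_sub {n : ℕ} (x y : EuclideanSpace ℝ (Fin n)) (s t : ℝ) :
    ‖x - y‖ ≤ ‖snocE x s - snocE y t‖ := by
  rw [snocE_sub]
  have h : ‖x - y‖ ^ 2 ≤ ‖snocE (x - y) (s - t)‖ ^ 2 := by
    rw [norm_snocE_sq]; nlinarith [sq_nonneg (s - t)]
  exact (pow_le_pow_iff_left₀ (norm_nonneg _) (norm_nonneg _) (by norm_num)).mp h

lemma snocE_projE {n : ℕ} (u : EuclideanSpace ℝ (Fin (n + 1))) :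
    snocE (projE u) (u (Fin.last n)) = u := by
  ext i
  induction i using Fin.lastCases with
  | last => simp [snocE_last]
  | cast j => simp [snocE_castSucc, projE]

lemma continuous_graphMap {n : ℕ} {F : EuclideanSpace ℝ (Fin n) → ℝ} (hF : Continuous F) :
    Continuous fun x => snocE x (F x) := by
  unfold snocE
  refine ((EuclideanSpace.equiv (Fin (n + 1)) ℝ).symm.continuous).comp ?_
  refine continuous_pi fun i => ?_
  induction i using Fin.lastCases with
  | last => simpa [Fin.snoc_last] using hF
  | cast j =>
      simp only [Fin.snoc_castSucc]
      exact (continuous_apply j).comp (EuclideanSpace.equiv (Fin n) ℝ).continuous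

lemma graph_ball_bound {σ : Measure (EuclideanSpace ℝ (Fin 3))}
    (h : IsC11GraphMeasure (n := 2) σ) :
    ∃ C : ℝ, 0 < C ∧ σ Set.univ < ⊤ ∧
      ∀ x r, 0 ≤ r → σ (ball x r) ≤ ENNReal.ofReal (C * r ^ 2) := by
  obtain ⟨F, F', K, L, hK, hder, hlip, rfl⟩ := h
  have hFc : Continuous F :=
    continuous_iff_continuousAt.2 fun x => (hder x).continuousAt
  have hΦ : Continuous fun x => snocE x (F x) := continuous_graphMap hFc
  obtain ⟨R, hR0, hKR⟩ : ∃ R, 0 ≤ R ∧ K ⊆ closedBall 0 R := by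
    obtain ⟨R, hKR⟩ := hK.isBounded.subset_closedBall 0
    rcases le_total 0 R with h0 | h0
    · exact ⟨R, h0, hKR⟩
    · exact ⟨0, le_refl 0, hKR.trans (closedBall_subset_closedBall h0)⟩
  set B : ℝ := ‖F' 0‖ + (L : ℝ) * R with hB
  have hBnn : 0 ≤ B := by positivity
  set M : ℝ := Real.sqrt (1 + B ^ 2) with hM
  have hM1 : 0 < M := Real.sqrt_pos.2 (by positivity)
  have hwle : ∀ a ∈ K, ENNReal.ofReal (Real.sqrt (1 + ‖F' a‖ ^ 2)) ≤ ENNReal.ofReal M := by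
    intro a ha
    apply ENNReal.ofReal_le_ofReal
    apply Real.sqrt_le_sqrt
    have h1 : ‖F' a‖ ≤ B := by
      have := hlip.dist_le_mul a 0
      have h2 : dist a 0 ≤ R := by simpa [dist_eq_norm] using mem_closedBall_iff_norm.1 (hKR ha)
      calc ‖F' a‖ ≤ ‖F' 0‖ + dist (F' a) (F' 0) := by
            rw [dist_eq_norm]
            have := norm_sub_norm_le (F' a) (F' 0)
            linarith [norm_sub_norm_le (F' a) (F' 0)]
        _ ≤ ‖F' 0‖ + (L : ℝ) * R := by
            have := hlip.dist_le_mul a 0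
            nlinarith [NNReal.coe_nonneg L]
    nlinarith [norm_nonneg (F' a)]
  set w : EuclideanSpace ℝ (Fin 2) → ENNReal :=
    fun x => ENNReal.ofReal (Real.sqrt (1 + ‖F' x‖ ^ 2)) with hw
  set V : ENNReal := volume (ball (0 : EuclideanSpace ℝ (Fin 2)) 1) with hV
  have hVfin : V < ⊤ :=
    lt_of_le_of_lt (measure_mono ball_subset_closedBall) (isCompact_closedBall _ _).measure_lt_top
  -- generic bound for measurable sets A contained in nice sets
  have key : ∀ A : Set (EuclideanSpace ℝ (Fin 2)), MeasurableSet A →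
      ((volume.restrict K).withDensity w) A ≤ ENNReal.ofReal M * volume (A ∩ K) := by
    intro A hA
    rw [withDensity_apply _ hA, Measure.restrict_restrict hA]
    calc ∫⁻ a in A ∩ K, w a ≤ ∫⁻ _ in A ∩ K, ENNReal.ofReal M := by
          apply setLIntegral_mono measurable_const
          exact fun a ha => hwle a ha.2
      _ = ENNReal.ofReal M * volume (A ∩ K) := by
          rw [setLIntegral_const, mul_comm]
  refine ⟨M * V.toReal + 1, by positivity, ?_, ?_⟩
  · rw [Measure.map_apply hΦ.measurable MeasurableSet.univ]
    calc ((volume.restrict K).withDensity w) Set.univ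
        ≤ ENNReal.ofReal M * volume (Set.univ ∩ K) := key _ MeasurableSet.univ
      _ < ⊤ := by
          apply ENNReal.mul_lt_top ENNReal.ofReal_lt_top
          rw [Set.univ_inter]
          exact hK.measure_lt_top
  · intro x r hr
    rw [Measure.map_apply hΦ.measurable measurableSet_ball]
    have hsub : (fun a => snocE a (F a)) ⁻¹' ball x r ∩ K ⊆ closedBall (projE x) r := by
      intro a ha
      have h1 : ‖snocE a (F a) - x‖ < r := mem_ball_iff_norm.1 ha.1
      have h2 : ‖a - projE x‖ ≤ ‖snocE a (F a) - snocE (projE x) (x (Fin.last 2))‖ :=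
        norm_sub_le_norm_snocE_sub _ _ _ _
      rw [snocE_projE] at h2
      exact mem_closedBall_iff_norm.2 (h2.trans h1.le)
    calc ((volume.restrict K).withDensity w) ((fun a => snocE a (F a)) ⁻¹' ball x r)
        ≤ ENNReal.ofReal M * volume ((fun a => snocE a (F a)) ⁻¹' ball x r ∩ K) :=
          key _ (hΦ.measurable measurableSet_ball)
      _ ≤ ENNReal.ofReal M * volume (closedBall (projE x) r) := by
          gcongr
      _ = ENNReal.ofReal M * (ENNReal.ofReal (r ^ 2) * V) := by
          rw [Measure.addHaar_closedBall volume _ hr, hV]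
          norm_num [finrank_euclideanSpace_fin]
      _ = ENNReal.ofReal (M * V.toReal * r ^ 2) := by
          rw [← ENNReal.ofReal_toReal hVfin.ne, ← ENNReal.ofReal_mul (by positivity),
            ← ENNReal.ofReal_mul (by positivity)]
          congr 1
          rw [ENNReal.toReal_ofReal ENNReal.toReal_nonneg]
          ring
      _ ≤ ENNReal.ofReal ((M * V.toReal + 1) * r ^ 2) := by
          apply ENNReal.ofReal_le_ofReal
          nlinarith [sq_nonneg r, ENNReal.toReal_nonneg (a := V)]

lemma hyp_ball_bound {σ : Measure E3} (hσ : IsC11HypersurfaceMeasure (n := 2) σ) :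
    ∃ C : ℝ, 0 < C ∧ σ Set.univ < ⊤ ∧
      ∀ x r, 0 ≤ r → σ (ball x r) ≤ ENNReal.ofReal (C * r ^ 2) := by
  obtain ⟨m, A, σs, hg, rfl⟩ := hσ
  choose C hC0 hfin hball using fun i => graph_ball_bound (hg i)
  have hsum0 : 0 ≤ ∑ i, 4 * C i := Finset.sum_nonneg fun i _ => by nlinarith [hC0 i]
  refine ⟨(∑ i, 4 * C i) + 1, by linarith, ?_, ?_⟩
  · rw [Measure.finset_sum_apply]
    refine ENNReal.sum_lt_top.2 fun i _ => ?_
    rw [Measure.map_apply (A i).continuous.measurable MeasurableSet.univ]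
    exact lt_of_le_of_lt (measure_mono (Set.subset_univ _)) (hfin i)
  · intro x r hr
    rw [Measure.finset_sum_apply]
    have hterm : ∀ i, (Measure.map (A i) (σs i)) (ball x r) ≤ ENNReal.ofReal (4 * C i * r ^ 2) := by
      intro i
      rw [Measure.map_apply (A i).continuous.measurable measurableSet_ball]
      rcases Set.eq_empty_or_nonempty ((A i) ⁻¹' ball x r) with he | ⟨z₀, hz₀⟩
      · rw [he, measure_empty]
        positivity
      · have hsub : (A i) ⁻¹' ball x r ⊆ ball z₀ (2 * r) := by
          intro z hz
          have h1 : dist (A i z) x < r := mem_ball.1 hz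
          have h2 : dist (A i z₀) x < r := mem_ball.1 hz₀
          have h3 : dist z z₀ = dist (A i z) (A i z₀) := ((A i).dist_map z z₀).symm
          have := dist_triangle (A i z) x (A i z₀)
          rw [mem_ball, h3]
          rw [dist_comm (A i z₀) x] at h2
          linarith [dist_triangle (A i z) x (A i z₀)]
        calc σs i ((A i) ⁻¹' ball x r) ≤ σs i (ball z₀ (2 * r)) := measure_mono hsub
          _ ≤ ENNReal.ofReal (C i * (2 * r) ^ 2) := hball i z₀ (2 * r) (by linarith)
          _ = ENNReal.ofReal (4 * C i * r ^ 2) := by ring_nf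
    calc (∑ i, (Measure.map (A i) (σs i)) (ball x r)) ≤ ∑ i, ENNReal.ofReal (4 * C i * r ^ 2) :=
          Finset.sum_le_sum fun i _ => hterm i
      _ = ENNReal.ofReal (∑ i, 4 * C i * r ^ 2) := by
          rw [ENNReal.ofReal_sum_of_nonneg]
          intro i _
          exact mul_nonneg (by nlinarith [hC0 i]) (sq_nonneg r)
      _ ≤ ENNReal.ofReal (((∑ i, 4 * C i) + 1) * r ^ 2) := by
          apply ENNReal.ofReal_le_ofReal
          rw [← Finset.sum_mul]
          nlinarith [sq_nonneg r]

def hker (t u : ℝ) : ℝ := (t * u⁻¹ + (u ^ 2)⁻¹) * Real.exp (-(t * u))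

lemma hker_nonneg {t u : ℝ} (ht : 0 ≤ t) (hu : 0 < u) : 0 ≤ hker t u :=
  mul_nonneg (add_nonneg (mul_nonneg ht (inv_nonneg.2 hu.le)) (inv_nonneg.2 (sq_nonneg u)))
    (Real.exp_pos _).le

lemma exp_deriv_aux (t u : ℝ) :
    HasDerivAt (fun u => Real.exp (-(t * u))) (Real.exp (-(t * u)) * (-t)) u := by
  have h1 : HasDerivAt (fun u : ℝ => -(t * u)) (-t) u := by
    have h := ((hasDerivAt_id u).const_mul t).neg
    simp only [mul_one] at h
    exact h
  exact h1.exp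

lemma ftc1 (t s : ℝ) (ht : 0 < t) (hs : 0 < s) :
    IntegrableOn (hker t) (Set.Ioi s) ∧
      ∫ u in Set.Ioi s, hker t u = Real.exp (-(t * s)) / s := by
  set g : ℝ → ℝ := fun u => -(Real.exp (-(t * u)) / u) with hg
  have hderiv : ∀ u ∈ Set.Ici s, HasDerivAt g (hker t u) u := by
    intro u hu
    have hu0 : 0 < u := lt_of_lt_of_le hs hu
    have h2 : HasDerivAt (fun u => Real.exp (-(t * u)) / u)
        ((Real.exp (-(t * u)) * (-t) * u - Real.exp (-(t * u)) * 1) / u ^ 2) u :=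
      (exp_deriv_aux t u).div (hasDerivAt_id u) hu0.ne'
    have : HasDerivAt g (-((Real.exp (-(t * u)) * (-t) * u - Real.exp (-(t * u)) * 1) / u ^ 2)) u := h2.neg
    convert this using 1
    unfold hker
    field_simp
    ring
  have hnonneg : ∀ u ∈ Set.Ioi s, 0 ≤ hker t u := fun u hu =>
    hker_nonneg ht.le (hs.trans hu)
  have htend : Tendsto g atTop (nhds 0) := by
    have h1 : Tendsto (fun u => Real.exp (-(t * u))) atTop (nhds 0) := by
      apply Real.tendsto_exp_atBot.comp
      exact tendsto_neg_atTop_atBot.comp (Tendsto.const_mul_atTop ht tendsto_id)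
    have h2 : Tendsto (fun u : ℝ => u⁻¹) atTop (nhds 0) := tendsto_inv_atTop_zero
    have h3 := h1.mul h2
    simp only [mul_zero] at h3
    have h4 : (fun u => Real.exp (-(t * u)) * u⁻¹) = fun u => Real.exp (-(t * u)) / u := by
      funext u; rw [div_eq_mul_inv]
    rw [h4] at h3
    simpa using h3.neg
  have hint : IntegrableOn (hker t) (Set.Ioi s) :=
    integrableOn_Ioi_deriv_of_nonneg' hderiv hnonneg htend
  refine ⟨hint, ?_⟩
  rw [integral_Ioi_of_hasDerivAt_of_tendsto' hderiv hint htend]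
  simp [hg]

lemma ftc2 (t : ℝ) (ht : 0 < t) :
    IntegrableOn (fun u => (t * u + 1) * Real.exp (-(t * u))) (Set.Ioi 0) ∧
      ∫ u in Set.Ioi 0, (t * u + 1) * Real.exp (-(t * u)) = 2 / t := by
  set g : ℝ → ℝ := fun u => -((u + 2 / t) * Real.exp (-(t * u))) with hg
  have hderiv : ∀ u ∈ Set.Ici (0 : ℝ), HasDerivAt g ((t * u + 1) * Real.exp (-(t * u))) u := by
    intro u _
    have h2 : HasDerivAt (fun u : ℝ => (u + 2 / t) * Real.exp (-(t * u)))
        (1 * Real.exp (-(t * u)) + (u + 2 / t) * (Real.exp (-(t * u)) * (-t))) u :=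
      ((hasDerivAt_id u).add_const (2 / t)).mul (exp_deriv_aux t u)
    have : HasDerivAt g (-(1 * Real.exp (-(t * u)) + (u + 2 / t) * (Real.exp (-(t * u)) * (-t)))) u := h2.neg
    convert this using 1
    field_simp
    ring
  have hnonneg : ∀ u ∈ Set.Ioi (0 : ℝ), 0 ≤ (t * u + 1) * Real.exp (-(t * u)) := by
    intro u hu
    have : (0:ℝ) < u := hu
    positivity
  have htend : Tendsto g atTop (nhds 0) := by
    have hue : Tendsto (fun y : ℝ => y * Real.exp (-y)) atTop (nhds 0) := by
      simpa using Real.tendsto_pow_mul_exp_neg_atTop_nhds_zero 1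
    have htu : Tendsto (fun u : ℝ => t * u) atTop atTop :=
      Tendsto.const_mul_atTop ht tendsto_id
    have h1 : Tendsto (fun u : ℝ => (t * u) * Real.exp (-(t * u))) atTop (nhds 0) := hue.comp htu
    have h2 : Tendsto (fun u : ℝ => u * Real.exp (-(t * u))) atTop (nhds 0) := by
      have h3 := h1.const_mul (1 / t)
      simp only [mul_zero] at h3
      refine h3.congr fun u => ?_
      field_simp
    have h4 : Tendsto (fun u : ℝ => (2 / t) * Real.exp (-(t * u))) atTop (nhds 0) := by
      have h5 : Tendsto (fun u => Real.exp (-(t * u))) atTop (nhds 0) := by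
        apply Real.tendsto_exp_atBot.comp
        exact tendsto_neg_atTop_atBot.comp (Tendsto.const_mul_atTop ht tendsto_id)
      simpa using h5.const_mul (2 / t)
    have h6 := h2.add h4
    simp only [add_zero] at h6
    have h7 : Tendsto (fun u : ℝ => (u + 2 / t) * Real.exp (-(t * u))) atTop (nhds 0) := by
      refine h6.congr fun u => ?_
      ring
    simpa using h7.neg
  have hint := integrableOn_Ioi_deriv_of_nonneg' hderiv hnonneg htend
  refine ⟨hint, ?_⟩
  rw [integral_Ioi_of_hasDerivAt_of_tendsto' hderiv hint htend]
  simp [hg]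


lemma measurable_hker (t : ℝ) : Measurable (hker t) := by
  unfold hker
  fun_prop

lemma layer_cake_bound (σ : Measure E3) [IsFiniteMeasure σ] (t : ℝ) (ht : 0 < t) (x : E3) :
    ∫⁻ y, ENNReal.ofReal (‖x - y‖⁻¹ * Real.exp (-(t * ‖x - y‖))) ∂σ ≤
      ∫⁻ u in Set.Ioi (0 : ℝ), ENNReal.ofReal (hker t u) * σ (ball x u) := by
  set A : Set (E3 × ℝ) := {p | ‖x - p.1‖ < p.2} with hA
  have hAopen : IsOpen A := by
    have : Continuous fun p : E3 × ℝ => p.2 - ‖x - p.1‖ := by fun_prop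
    have : A = (fun p : E3 × ℝ => p.2 - ‖x - p.1‖) ⁻¹' Set.Ioi 0 := by
      ext p; simp [hA, sub_pos]
    rw [this]
    exact (by fun_prop : Continuous fun p : E3 × ℝ => p.2 - ‖x - p.1‖).isOpen_preimage _ isOpen_Ioi
  set f : E3 → ℝ → ENNReal :=
    fun y u => ENNReal.ofReal (hker t u) * A.indicator (fun _ => 1) (y, u) with hf
  have hmeas : AEMeasurable (Function.uncurry f) (σ.prod (volume.restrict (Set.Ioi 0))) := by
    apply Measurable.aemeasurable
    apply Measurable.mul
    · exact ((measurable_hker t).comp measurable_snd).ennreal_ofReal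
    · exact (measurable_one.indicator hAopen.measurableSet).comp measurable_id
  -- pointwise bound
  have hpt : ∀ y : E3, ENNReal.ofReal (‖x - y‖⁻¹ * Real.exp (-(t * ‖x - y‖))) ≤
      ∫⁻ u in Set.Ioi (0 : ℝ), f y u := by
    intro y
    set s := ‖x - y‖ with hs
    have hs0 : 0 ≤ s := norm_nonneg _
    have hind : ∀ u : ℝ, f y u = (Set.Ioi s).indicator (fun u => ENNReal.ofReal (hker t u)) u := by
      intro u
      by_cases h : s < u
      · simp [hf, Set.indicator_apply, hA, h]
        intro h'; exfalso; rw [hs] at h; linarith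
      · simp [hf, Set.indicator_apply, hA, h]
        intro h'; exfalso; exact h (by rw [hs]; exact h')
    rcases eq_or_lt_of_le hs0 with h0 | hpos
    · simp [← h0]
    · have heq : ∫⁻ u in Set.Ioi (0 : ℝ), f y u =
          ∫⁻ u in Set.Ioi s, ENNReal.ofReal (hker t u) := by
        simp_rw [hind]
        rw [lintegral_indicator measurableSet_Ioi, Measure.restrict_restrict measurableSet_Ioi]
        congr 1
        rw [Set.Ioi_inter_Ioi, max_eq_left hs0]
      rw [heq, ← ofReal_integral_eq_lintegral_ofReal (ftc1 t s ht hpos).1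
        ((ae_restrict_iff' measurableSet_Ioi).2 (Filter.Eventually.of_forall fun u hu =>
          hker_nonneg ht.le (hpos.trans hu))), (ftc1 t s ht hpos).2]
      apply ENNReal.ofReal_le_ofReal
      rw [inv_mul_eq_div]
  calc ∫⁻ y, ENNReal.ofReal (‖x - y‖⁻¹ * Real.exp (-(t * ‖x - y‖))) ∂σ
      ≤ ∫⁻ y, (∫⁻ u in Set.Ioi (0 : ℝ), f y u) ∂σ := lintegral_mono hpt
    _ = ∫⁻ u in Set.Ioi (0 : ℝ), ∫⁻ y, f y u ∂σ := lintegral_lintegral_swap hmeas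
    _ = ∫⁻ u in Set.Ioi (0 : ℝ), ENNReal.ofReal (hker t u) * σ (ball x u) := by
        apply lintegral_congr
        intro u
        rw [hf]
        simp only
        rw [lintegral_const_mul]
        · congr 1
          have : (fun y => A.indicator (fun _ => (1:ENNReal)) (y, u)) =
              (ball x u).indicator (fun _ => 1) := by
            funext y
            have hmem : y ∈ ball x u ↔ ‖x - y‖ < u := by
              rw [mem_ball, dist_eq_norm, norm_sub_rev y x]
            by_cases h : ‖x - y‖ < u
            · rw [Set.indicator_of_mem (by exact h), Set.indicator_of_mem (hmem.2 h)]
            · rw [Set.indicator_of_notMem (by exact h),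
                Set.indicator_of_notMem (fun hy => h (hmem.1 hy))]
          rw [this, lintegral_indicator measurableSet_ball]
          simp
        · have : (fun y => A.indicator (fun _ => (1:ENNReal)) (y, u)) =
              (ball x u).indicator (fun _ => 1) := by
            funext y
            have hmem : y ∈ ball x u ↔ ‖x - y‖ < u := by
              rw [mem_ball, dist_eq_norm, norm_sub_rev y x]
            by_cases h : ‖x - y‖ < u
            · rw [Set.indicator_of_mem (by exact h), Set.indicator_of_mem (hmem.2 h)]
            · rw [Set.indicator_of_notMem (by exact h),
                Set.indicator_of_notMem (fun hy => h (hmem.1 hy))]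
          rw [this]
          exact measurable_one.indicator measurableSet_ball

lemma schur_row (σ : Measure E3) [IsFiniteMeasure σ] {Creg t : ℝ} (hC : 0 < Creg)
    (hball : ∀ x r, 0 ≤ r → σ (ball x r) ≤ ENNReal.ofReal (Creg * r ^ 2)) (ht : 0 < t) (x : E3) :
    ∫⁻ u in Set.Ioi (0 : ℝ), ENNReal.ofReal (hker t u) * σ (ball x u) ≤
      ENNReal.ofReal ((Real.sqrt 3 * (2 * Creg + (σ Set.univ).toReal + 1)) *
        (2 + t ^ 2) ^ (-(1/2 : ℝ))) := by
  set S : ℝ := (σ Set.univ).toReal with hS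
  have hS0 : 0 ≤ S := ENNReal.toReal_nonneg
  set D : ℝ := Real.sqrt 3 * (2 * Creg + S + 1) with hD
  have hD0 : 0 < D := by positivity
  have hX0 : (0:ℝ) < 2 + t ^ 2 := by positivity
  have hJ : (2 + t ^ 2 : ℝ) ^ (-(1/2 : ℝ)) = (Real.sqrt (2 + t ^ 2))⁻¹ := by
    rw [Real.rpow_neg hX0.le, Real.sqrt_eq_rpow]
  have hsqX : (0:ℝ) < Real.sqrt (2 + t ^ 2) := Real.sqrt_pos.2 hX0
  have hptbd : ∀ u : ℝ, u ∈ Set.Ioi (0:ℝ) →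
      ENNReal.ofReal (hker t u) * σ (ball x u) ≤
        ENNReal.ofReal (Creg * ((t * u + 1) * Real.exp (-(t * u)))) := by
    intro u hu
    have hu0 : (0:ℝ) < u := hu
    calc ENNReal.ofReal (hker t u) * σ (ball x u)
        ≤ ENNReal.ofReal (hker t u) * ENNReal.ofReal (Creg * u ^ 2) := by
          gcongr
          exact hball x u hu0.le
      _ = ENNReal.ofReal (hker t u * (Creg * u ^ 2)) :=
          (ENNReal.ofReal_mul (hker_nonneg ht.le hu0)).symm
      _ = ENNReal.ofReal (Creg * ((t * u + 1) * Real.exp (-(t * u)))) := by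
          congr 1
          unfold hker
          field_simp
  rcases le_total 1 t with ht1 | ht1
  · -- large t : use the full quadratic bound
    have step1 : ∫⁻ u in Set.Ioi (0 : ℝ), ENNReal.ofReal (hker t u) * σ (ball x u) ≤
        ENNReal.ofReal Creg * ∫⁻ u in Set.Ioi (0 : ℝ),
          ENNReal.ofReal ((t * u + 1) * Real.exp (-(t * u))) := by
      rw [← lintegral_const_mul]
      · apply setLIntegral_mono
        · apply Measurable.const_mul
          apply Measurable.ennreal_ofReal
          fun_prop
        · intro u hu
          rw [← ENNReal.ofReal_mul hC.le]
          exact hptbd u hu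
      · apply Measurable.ennreal_ofReal; fun_prop
    have step2 : ∫⁻ u in Set.Ioi (0 : ℝ), ENNReal.ofReal ((t * u + 1) * Real.exp (-(t * u))) =
        ENNReal.ofReal (2 / t) := by
      rw [← ofReal_integral_eq_lintegral_ofReal (ftc2 t ht).1
        ((ae_restrict_iff' measurableSet_Ioi).2 (Filter.Eventually.of_forall fun u hu => by
          have : (0:ℝ) < u := hu
          positivity)), (ftc2 t ht).2]
    calc ∫⁻ u in Set.Ioi (0 : ℝ), ENNReal.ofReal (hker t u) * σ (ball x u)
        ≤ ENNReal.ofReal Creg * ENNReal.ofReal (2 / t) := by rw [← step2]; exact step1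
      _ = ENNReal.ofReal (Creg * (2 / t)) := (ENNReal.ofReal_mul hC.le).symm
      _ ≤ ENNReal.ofReal (D * (2 + t ^ 2) ^ (-(1/2 : ℝ))) := by
          apply ENNReal.ofReal_le_ofReal
          rw [hJ, ← div_eq_mul_inv]
          have h1 : Real.sqrt (2 + t ^ 2) ≤ Real.sqrt 3 * t := by
            have : Real.sqrt (2 + t ^ 2) ≤ Real.sqrt (3 * t ^ 2) :=
              Real.sqrt_le_sqrt (by nlinarith)
            rwa [Real.sqrt_mul (by norm_num), Real.sqrt_sq ht.le] at this
          rw [show Creg * (2 / t) = (2 * Creg) / t by ring, div_le_div_iff₀ ht hsqX]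
          have h3 : (0:ℝ) ≤ Real.sqrt 3 := Real.sqrt_nonneg 3
          calc 2 * Creg * Real.sqrt (2 + t ^ 2) ≤ 2 * Creg * (Real.sqrt 3 * t) := by
                gcongr
            _ ≤ D * t := by rw [hD]; nlinarith
  · -- small t : split the integral at 1
    have hsplit : ∫⁻ u in Set.Ioi (0 : ℝ), ENNReal.ofReal (hker t u) * σ (ball x u) =
        (∫⁻ u in Set.Ioc (0:ℝ) 1, ENNReal.ofReal (hker t u) * σ (ball x u)) +
        ∫⁻ u in Set.Ioi (1:ℝ), ENNReal.ofReal (hker t u) * σ (ball x u) := by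
      rw [← lintegral_union measurableSet_Ioi (Set.Ioc_disjoint_Ioi le_rfl),
        Set.Ioc_union_Ioi_eq_Ioi zero_le_one]
    have part1 : ∫⁻ u in Set.Ioc (0:ℝ) 1, ENNReal.ofReal (hker t u) * σ (ball x u) ≤
        ENNReal.ofReal Creg := by
      calc ∫⁻ u in Set.Ioc (0:ℝ) 1, ENNReal.ofReal (hker t u) * σ (ball x u)
          ≤ ∫⁻ _ in Set.Ioc (0:ℝ) 1, ENNReal.ofReal Creg := by
            apply setLIntegral_mono measurable_const
            intro u hu
            refine (hptbd u hu.1).trans (ENNReal.ofReal_le_ofReal ?_)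
            have hexp : (t * u + 1) * Real.exp (-(t * u)) ≤ 1 := by
              have h1 := Real.add_one_le_exp (t * u)
              have h2 : (0:ℝ) < Real.exp (-(t * u)) := Real.exp_pos _
              calc (t * u + 1) * Real.exp (-(t * u)) ≤ Real.exp (t * u) * Real.exp (-(t * u)) :=
                    by gcongr
                _ = 1 := by rw [← Real.exp_add]; simp
            nlinarith
        _ = ENNReal.ofReal Creg := by
            rw [setLIntegral_const, Real.volume_Ioc]
            simp
    have part2 : ∫⁻ u in Set.Ioi (1:ℝ), ENNReal.ofReal (hker t u) * σ (ball x u) ≤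
        σ Set.univ := by
      calc ∫⁻ u in Set.Ioi (1:ℝ), ENNReal.ofReal (hker t u) * σ (ball x u)
          ≤ ∫⁻ u in Set.Ioi (1:ℝ), ENNReal.ofReal (hker t u) * σ Set.univ := by
            apply setLIntegral_mono ((((measurable_hker t).ennreal_ofReal).mul_const _).comp measurable_id)
            intro u _
            exact mul_le_mul_right (measure_mono (Set.subset_univ _)) _
        _ = (∫⁻ u in Set.Ioi (1:ℝ), ENNReal.ofReal (hker t u)) * σ Set.univ := by
            rw [lintegral_mul_const]
            exact (measurable_hker t).ennreal_ofReal
        _ ≤ 1 * σ Set.univ := by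
            gcongr
            rw [← ofReal_integral_eq_lintegral_ofReal (ftc1 t 1 ht one_pos).1
              ((ae_restrict_iff' measurableSet_Ioi).2 (Filter.Eventually.of_forall fun u hu =>
                hker_nonneg ht.le (one_pos.trans hu))), (ftc1 t 1 ht one_pos).2]
            calc ENNReal.ofReal (Real.exp (-(t * 1)) / 1) ≤ ENNReal.ofReal 1 := by
                  apply ENNReal.ofReal_le_ofReal
                  rw [div_one]
                  exact Real.exp_le_one_iff.2 (by nlinarith)
              _ = 1 := ENNReal.ofReal_one
        _ = σ Set.univ := one_mul _
    calc ∫⁻ u in Set.Ioi (0 : ℝ), ENNReal.ofReal (hker t u) * σ (ball x u)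
        ≤ ENNReal.ofReal Creg + σ Set.univ := by
          rw [hsplit]; exact add_le_add part1 part2
      _ = ENNReal.ofReal (Creg + S) := by
          rw [ENNReal.ofReal_add hC.le hS0, hS, ENNReal.ofReal_toReal (measure_ne_top σ _)]
      _ ≤ ENNReal.ofReal (D * (2 + t ^ 2) ^ (-(1/2 : ℝ))) := by
          apply ENNReal.ofReal_le_ofReal
          rw [hJ, ← div_eq_mul_inv]
          have h1 : Real.sqrt (2 + t ^ 2) ≤ Real.sqrt 3 :=
            Real.sqrt_le_sqrt (by nlinarith)
          have h2 : (2 * Creg + S + 1) = D / Real.sqrt 3 := by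
            rw [hD]
            field_simp
          calc Creg + S ≤ 2 * Creg + S + 1 := by linarith
            _ = D / Real.sqrt 3 := h2
            _ ≤ D / Real.sqrt (2 + t ^ 2) :=
                div_le_div_of_nonneg_left hD0.le hsqX h1

lemma row_bound (σ : Measure E3) [IsFiniteMeasure σ] {Creg t : ℝ} (hC : 0 < Creg)
    (hball : ∀ x r, 0 ≤ r → σ (ball x r) ≤ ENNReal.ofReal (Creg * r ^ 2)) (ht : 0 < t) (x : E3) :
    ∫⁻ y, ENNReal.ofReal (‖x - y‖⁻¹ * Real.exp (-(t * ‖x - y‖))) ∂σ ≤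
      ENNReal.ofReal ((Real.sqrt 3 * (2 * Creg + (σ Set.univ).toReal + 1)) *
        (2 + t ^ 2) ^ (-(1/2 : ℝ))) :=
  (layer_cake_bound σ t ht x).trans (schur_row σ hC hball ht x)

-- norm of the integrand
lemma norm_green_le (lam : ℂ) (f g : E3 → ℂ) (p : E3 × E3) :
    ‖greenIntegrand3 lam f g p‖ ≤
      (‖p.1 - p.2‖⁻¹ * Real.exp (-(lam.im * ‖p.1 - p.2‖))) * (‖f p.2‖ * ‖g p.1‖) := by
  set r : ℝ := ‖p.1 - p.2‖ with hr
  have hr0 : 0 ≤ r := norm_nonneg _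
  have h1 : ‖(((4 * Real.pi * r : ℝ)) : ℂ)⁻¹‖ ≤ r⁻¹ := by
    rw [norm_inv, Complex.norm_real, Real.norm_eq_abs, abs_of_nonneg (by positivity)]
    rcases eq_or_lt_of_le hr0 with h0 | h0
    · simp [← h0]
    · rw [inv_le_inv₀ (by positivity) h0]
      nlinarith [Real.pi_gt_three]
  have h2 : ‖Complex.exp (Complex.I * lam * (r : ℂ))‖ = Real.exp (-(lam.im * r)) := by
    rw [Complex.norm_exp]
    congr 1
    simp [Complex.mul_re, Complex.mul_im]
  calc ‖greenIntegrand3 lam f g p‖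
      = ‖(((4 * Real.pi * r : ℝ)) : ℂ)⁻¹‖ * ‖Complex.exp (Complex.I * lam * (r : ℂ))‖ *
          ‖f p.2‖ * ‖(starRingEnd ℂ) (g p.1)‖ := by
        rw [greenIntegrand3, norm_mul, norm_mul, norm_mul]
    _ = ‖(((4 * Real.pi * r : ℝ)) : ℂ)⁻¹‖ * Real.exp (-(lam.im * r)) * ‖f p.2‖ * ‖g p.1‖ := by
        rw [h2, RCLike.norm_conj]
    _ ≤ r⁻¹ * Real.exp (-(lam.im * r)) * ‖f p.2‖ * ‖g p.1‖ := by
        have e := Real.exp_pos (-(lam.im * r))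
        gcongr
    _ = (r⁻¹ * Real.exp (-(lam.im * r))) * (‖f p.2‖ * ‖g p.1‖) := by ring

theorem main_bound (σ : Measure E3) [IsFiniteMeasure σ] {Creg : ℝ} (hC : 0 < Creg)
    (hball : ∀ x r, 0 ≤ r → σ (ball x r) ≤ ENNReal.ofReal (Creg * r ^ 2))
    (lam : ℂ) (hlam : 0 < lam.im) (f g : E3 → ℂ) (hf : MemLp f 2 σ) (hg : MemLp g 2 σ) :
    Integrable (greenIntegrand3 lam f g) (σ.prod σ) ∧
      ‖∫ p, greenIntegrand3 lam f g p ∂(σ.prod σ)‖ ≤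
        (Real.sqrt 3 * (2 * Creg + (σ Set.univ).toReal + 1)) *
          (2 + lam.im ^ 2) ^ (-(1/2 : ℝ)) * L2norm σ f * L2norm σ g := by
  set t : ℝ := lam.im with htdef
  set D : ℝ := Real.sqrt 3 * (2 * Creg + (σ Set.univ).toReal + 1) with hD
  have hD0 : 0 < D := by
    have := ENNReal.toReal_nonneg (a := σ Set.univ)
    positivity
  set J : ℝ := (2 + t ^ 2) ^ (-(1/2 : ℝ)) with hJ
  have hJ0 : 0 < J := Real.rpow_pos_of_pos (by positivity) _
  set M : ENNReal := ENNReal.ofReal (D * J) with hM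
  have hMfin : M ≠ ⊤ := ENNReal.ofReal_ne_top
  have hrow : ∀ x : E3,
      ∫⁻ y, ENNReal.ofReal (‖x - y‖⁻¹ * Real.exp (-(t * ‖x - y‖))) ∂σ ≤ M :=
    fun x => row_bound σ hC hball hlam x
  -- the kernel
  set k : E3 × E3 → ENNReal :=
    fun p => ENNReal.ofReal (‖p.1 - p.2‖⁻¹ * Real.exp (-(t * ‖p.1 - p.2‖))) with hk
  have hnc : Continuous fun p : E3 × E3 => ‖p.1 - p.2‖ := (continuous_fst.sub continuous_snd).norm
  have hkm : Measurable k := by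
    apply Measurable.ennreal_ofReal
    exact (hnc.measurable.inv).mul ((hnc.measurable.const_mul t).neg.exp)
  have hfm : AEMeasurable (fun p : E3 × E3 => (‖f p.2‖₊ : ENNReal)) (σ.prod σ) :=
    hf.1.comp_snd.enorm
  have hgm : AEMeasurable (fun p : E3 × E3 => (‖g p.1‖₊ : ENNReal)) (σ.prod σ) :=
    hg.1.comp_fst.enorm
  set If : ENNReal := ∫⁻ y, (‖f y‖₊ : ENNReal) ^ (2:ℝ) ∂σ with hIf
  set Ig : ENNReal := ∫⁻ y, (‖g y‖₊ : ENNReal) ^ (2:ℝ) ∂σ with hIg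
  -- Cauchy-Schwarz
  set a : E3 × E3 → ENNReal := fun p => k p ^ (1/2:ℝ) * (‖f p.2‖₊ : ENNReal) with ha
  set b : E3 × E3 → ENNReal := fun p => k p ^ (1/2:ℝ) * (‖g p.1‖₊ : ENNReal) with hb
  have hksplit : ∀ p, k p ^ (1/2:ℝ) * k p ^ (1/2:ℝ) = k p := by
    intro p
    rw [← ENNReal.rpow_add_of_nonneg _ _ (by norm_num) (by norm_num)]
    norm_num
  have hab : ∀ p, a p * b p = k p * ((‖f p.2‖₊ : ENNReal) * (‖g p.1‖₊ : ENNReal)) := by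
    intro p
    rw [ha, hb]
    simp only
    rw [mul_mul_mul_comm, hksplit p]
  have haM : AEMeasurable a (σ.prod σ) :=
    ((hkm.pow measurable_const).aemeasurable.mul hfm)
  have hbM : AEMeasurable b (σ.prod σ) :=
    ((hkm.pow measurable_const).aemeasurable.mul hgm)
  have hsqa : ∀ p, a p ^ (2:ℝ) = k p * (‖f p.2‖₊ : ENNReal) ^ (2:ℝ) := by
    intro p
    rw [ha]
    simp only
    rw [ENNReal.mul_rpow_of_nonneg _ _ (by norm_num), ← ENNReal.rpow_mul]
    norm_num
  have hsqb : ∀ p, b p ^ (2:ℝ) = k p * (‖g p.1‖₊ : ENNReal) ^ (2:ℝ) := by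
    intro p
    rw [hb]
    simp only
    rw [ENNReal.mul_rpow_of_nonneg _ _ (by norm_num), ← ENNReal.rpow_mul]
    norm_num
  have hCS : ∫⁻ p, k p * ((‖f p.2‖₊ : ENNReal) * (‖g p.1‖₊ : ENNReal)) ∂(σ.prod σ) ≤
      (∫⁻ p, k p * (‖f p.2‖₊ : ENNReal) ^ (2:ℝ) ∂(σ.prod σ)) ^ (1/2:ℝ) *
      (∫⁻ p, k p * (‖g p.1‖₊ : ENNReal) ^ (2:ℝ) ∂(σ.prod σ)) ^ (1/2:ℝ) := by
    have h2 : Real.HolderConjugate 2 2 := Real.HolderConjugate.two_two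
    have := ENNReal.lintegral_mul_le_Lp_mul_Lq (σ.prod σ) h2 haM hbM
    simp only [Pi.mul_apply] at this
    calc ∫⁻ p, k p * ((‖f p.2‖₊ : ENNReal) * (‖g p.1‖₊ : ENNReal)) ∂(σ.prod σ)
        = ∫⁻ p, a p * b p ∂(σ.prod σ) := by
          apply lintegral_congr
          intro p
          rw [hab p]
      _ ≤ (∫⁻ p, a p ^ (2:ℝ) ∂(σ.prod σ)) ^ (1/2:ℝ) *
          (∫⁻ p, b p ^ (2:ℝ) ∂(σ.prod σ)) ^ (1/2:ℝ) := this
      _ = (∫⁻ p, k p * (‖f p.2‖₊ : ENNReal) ^ (2:ℝ) ∂(σ.prod σ)) ^ (1/2:ℝ) *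
          (∫⁻ p, k p * (‖g p.1‖₊ : ENNReal) ^ (2:ℝ) ∂(σ.prod σ)) ^ (1/2:ℝ) := by
          rw [lintegral_congr hsqa, lintegral_congr hsqb]
  -- bounds on the two quadratic forms
  have hP : ∫⁻ p, k p * (‖f p.2‖₊ : ENNReal) ^ (2:ℝ) ∂(σ.prod σ) ≤ M * If := by
    have hmeasP : AEMeasurable (fun p : E3 × E3 => k p * (‖f p.2‖₊ : ENNReal) ^ (2:ℝ))
        (σ.prod σ) := hkm.aemeasurable.mul (hfm.pow aemeasurable_const)
    rw [lintegral_prod_symm _ hmeasP]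
    calc ∫⁻ y, ∫⁻ x, k (x, y) * (‖f y‖₊ : ENNReal) ^ (2:ℝ) ∂σ ∂σ
        = ∫⁻ y, (∫⁻ x, k (x, y) ∂σ) * (‖f y‖₊ : ENNReal) ^ (2:ℝ) ∂σ := by
          apply lintegral_congr
          intro y
          have hmx : AEMeasurable (fun x => k (x, y)) σ :=
            (hkm.comp measurable_prodMk_right).aemeasurable
          exact lintegral_mul_const'' _ hmx
      _ ≤ ∫⁻ y, M * (‖f y‖₊ : ENNReal) ^ (2:ℝ) ∂σ := by
          apply lintegral_mono
          intro y
          apply mul_le_mul_left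
          have : ∫⁻ x, k (x, y) ∂σ =
              ∫⁻ x, ENNReal.ofReal (‖y - x‖⁻¹ * Real.exp (-(t * ‖y - x‖))) ∂σ := by
            apply lintegral_congr
            intro x
            rw [hk]
            simp only [norm_sub_rev x y]
          rw [this]
          exact hrow y
      _ = M * If := lintegral_const_mul' _ _ hMfin
  have hQ : ∫⁻ p, k p * (‖g p.1‖₊ : ENNReal) ^ (2:ℝ) ∂(σ.prod σ) ≤ M * Ig := by
    have hmeasQ : AEMeasurable (fun p : E3 × E3 => k p * (‖g p.1‖₊ : ENNReal) ^ (2:ℝ))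
        (σ.prod σ) := hkm.aemeasurable.mul (hgm.pow aemeasurable_const)
    rw [lintegral_prod _ hmeasQ]
    calc ∫⁻ x, ∫⁻ y, k (x, y) * (‖g x‖₊ : ENNReal) ^ (2:ℝ) ∂σ ∂σ
        = ∫⁻ x, (∫⁻ y, k (x, y) ∂σ) * (‖g x‖₊ : ENNReal) ^ (2:ℝ) ∂σ := by
          apply lintegral_congr
          intro x
          have hmy : AEMeasurable (fun y => k (x, y)) σ :=
            (hkm.comp measurable_prodMk_left).aemeasurable
          exact lintegral_mul_const'' _ hmy
      _ ≤ ∫⁻ x, M * (‖g x‖₊ : ENNReal) ^ (2:ℝ) ∂σ := by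
          apply lintegral_mono
          intro x
          exact mul_le_mul_left (hrow x) _
      _ = M * Ig := lintegral_const_mul' _ _ hMfin
  -- total bound
  have hT : ∫⁻ p, k p * ((‖f p.2‖₊ : ENNReal) * (‖g p.1‖₊ : ENNReal)) ∂(σ.prod σ) ≤
      M * If ^ (1/2:ℝ) * Ig ^ (1/2:ℝ) := by
    calc ∫⁻ p, k p * ((‖f p.2‖₊ : ENNReal) * (‖g p.1‖₊ : ENNReal)) ∂(σ.prod σ)
        ≤ (∫⁻ p, k p * (‖f p.2‖₊ : ENNReal) ^ (2:ℝ) ∂(σ.prod σ)) ^ (1/2:ℝ) *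
          (∫⁻ p, k p * (‖g p.1‖₊ : ENNReal) ^ (2:ℝ) ∂(σ.prod σ)) ^ (1/2:ℝ) := hCS
      _ ≤ (M * If) ^ (1/2:ℝ) * (M * Ig) ^ (1/2:ℝ) := by
          exact mul_le_mul' (ENNReal.rpow_le_rpow hP (by norm_num)) (ENNReal.rpow_le_rpow hQ (by norm_num))
      _ = M * If ^ (1/2:ℝ) * Ig ^ (1/2:ℝ) := by
          rw [ENNReal.mul_rpow_of_nonneg _ _ (by norm_num),
            ENNReal.mul_rpow_of_nonneg _ _ (by norm_num)]
          rw [show M ^ (1/2:ℝ) * If ^ (1/2:ℝ) * (M ^ (1/2:ℝ) * Ig ^ (1/2:ℝ)) =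
            (M ^ (1/2:ℝ) * M ^ (1/2:ℝ)) * If ^ (1/2:ℝ) * Ig ^ (1/2:ℝ) by ring]
          rw [← ENNReal.rpow_add_of_nonneg _ _ (by norm_num) (by norm_num)]
          norm_num
  -- identification of L² quantities
  have hIf_int : Integrable (fun x => ‖f x‖ ^ 2) σ := by
    have h := hf.integrable_norm_rpow (by norm_num) (by norm_num)
    have heq : (fun x => ‖f x‖ ^ (2:ENNReal).toReal) = fun x => ‖f x‖ ^ 2 := by
      funext x
      rw [ENNReal.toReal_ofNat, show ((2:ℝ)) = ((2:ℕ):ℝ) by norm_num, Real.rpow_natCast]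
    rw [← heq]
    exact h
  have hIg_int : Integrable (fun x => ‖g x‖ ^ 2) σ := by
    have h := hg.integrable_norm_rpow (by norm_num) (by norm_num)
    have heq : (fun x => ‖g x‖ ^ (2:ENNReal).toReal) = fun x => ‖g x‖ ^ 2 := by
      funext x
      rw [ENNReal.toReal_ofNat, show ((2:ℝ)) = ((2:ℕ):ℝ) by norm_num, Real.rpow_natCast]
    rw [← heq]
    exact h
  have hIf_eq : If = ENNReal.ofReal (∫ x, ‖f x‖ ^ 2 ∂σ) := by
    rw [ofReal_integral_eq_lintegral_ofReal hIf_int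
      (Filter.Eventually.of_forall fun x => sq_nonneg _)]
    apply lintegral_congr
    intro x
    rw [ENNReal.ofReal_pow (norm_nonneg _), ofReal_norm, enorm_eq_nnnorm, ← ENNReal.rpow_natCast]
    norm_num
  have hIg_eq : Ig = ENNReal.ofReal (∫ x, ‖g x‖ ^ 2 ∂σ) := by
    rw [ofReal_integral_eq_lintegral_ofReal hIg_int
      (Filter.Eventually.of_forall fun x => sq_nonneg _)]
    apply lintegral_congr
    intro x
    rw [ENNReal.ofReal_pow (norm_nonneg _), ofReal_norm, enorm_eq_nnnorm, ← ENNReal.rpow_natCast]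
    norm_num
  have hIf_ne : If ≠ ⊤ := by rw [hIf_eq]; exact ENNReal.ofReal_ne_top
  have hIg_ne : Ig ≠ ⊤ := by rw [hIg_eq]; exact ENNReal.ofReal_ne_top
  have hL2f : (If ^ (1/2:ℝ)).toReal = L2norm σ f := by
    rw [← ENNReal.toReal_rpow, hIf_eq,
      ENNReal.toReal_ofReal (integral_nonneg fun x => sq_nonneg _), L2norm, Real.sqrt_eq_rpow]
  have hL2g : (Ig ^ (1/2:ℝ)).toReal = L2norm σ g := by
    rw [← ENNReal.toReal_rpow, hIg_eq,
      ENNReal.toReal_ofReal (integral_nonneg fun x => sq_nonneg _), L2norm, Real.sqrt_eq_rpow]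
  -- pointwise domination
  have hdom : ∀ p : E3 × E3, (‖greenIntegrand3 lam f g p‖₊ : ENNReal) ≤
      k p * ((‖f p.2‖₊ : ENNReal) * (‖g p.1‖₊ : ENNReal)) := by
    intro p
    rw [← enorm_eq_nnnorm, ← ofReal_norm]
    refine (ENNReal.ofReal_le_ofReal (norm_green_le lam f g p)).trans ?_
    rw [ENNReal.ofReal_mul (by positivity), ENNReal.ofReal_mul (norm_nonneg _),
      ofReal_norm, enorm_eq_nnnorm, ofReal_norm, enorm_eq_nnnorm]
  have hRHS : M * If ^ (1/2:ℝ) * Ig ^ (1/2:ℝ) ≠ ⊤ :=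
    ENNReal.mul_ne_top (ENNReal.mul_ne_top hMfin
      (ENNReal.rpow_ne_top_of_nonneg (by norm_num) hIf_ne))
      (ENNReal.rpow_ne_top_of_nonneg (by norm_num) hIg_ne)
  have hfin_total : ∫⁻ p, (‖greenIntegrand3 lam f g p‖₊ : ENNReal) ∂(σ.prod σ) < ⊤ :=
    lt_of_le_of_lt (lintegral_mono hdom) (lt_of_le_of_lt hT hRHS.lt_top)
  -- measurability
  have hsm : AEStronglyMeasurable (greenIntegrand3 lam f g) (σ.prod σ) := by
    have heq : greenIntegrand3 lam f g = fun p : E3 × E3 =>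
        (((((4 * Real.pi * ‖p.1 - p.2‖)⁻¹ : ℝ)) : ℂ) *
          Complex.exp (Complex.I * lam * (‖p.1 - p.2‖ : ℝ))) *
          (f p.2 * (starRingEnd ℂ) (g p.1)) := by
      funext p
      rw [greenIntegrand3, Complex.ofReal_inv]
      ring
    rw [heq]
    have hm1 : Measurable fun p : E3 × E3 => ((((4 * Real.pi * ‖p.1 - p.2‖)⁻¹ : ℝ)) : ℂ) :=
      Complex.measurable_ofReal.comp ((hnc.measurable.const_mul _).inv)
    have hm2 : Measurable fun p : E3 × E3 =>
        Complex.exp (Complex.I * lam * (‖p.1 - p.2‖ : ℝ)) := by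
      apply Continuous.measurable
      exact Complex.continuous_exp.comp (continuous_const.mul
        (Complex.continuous_ofReal.comp hnc))
    have hconj : AEStronglyMeasurable (fun p : E3 × E3 => (starRingEnd ℂ) (g p.1)) (σ.prod σ) :=
      continuous_star.comp_aestronglyMeasurable hg.1.comp_fst
    exact ((hm1.mul hm2).aestronglyMeasurable).mul (hf.1.comp_snd.mul hconj)
  have hInt : Integrable (greenIntegrand3 lam f g) (σ.prod σ) := ⟨hsm, hfin_total⟩
  refine ⟨hInt, ?_⟩
  calc ‖∫ p, greenIntegrand3 lam f g p ∂(σ.prod σ)‖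
      ≤ (∫⁻ p, ENNReal.ofReal ‖greenIntegrand3 lam f g p‖ ∂(σ.prod σ)).toReal :=
        norm_integral_le_lintegral_norm _
    _ ≤ (M * If ^ (1/2:ℝ) * Ig ^ (1/2:ℝ)).toReal := by
        apply ENNReal.toReal_mono hRHS
        refine le_trans ?_ hT
        apply lintegral_mono
        intro p
        show ENNReal.ofReal ‖greenIntegrand3 lam f g p‖ ≤
          k p * ((‖f p.2‖₊ : ENNReal) * (‖g p.1‖₊ : ENNReal))
        rw [ofReal_norm, enorm_eq_nnnorm]
        exact hdom p
    _ = D * J * L2norm σ f * L2norm σ g := by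
        rw [ENNReal.toReal_mul, ENNReal.toReal_mul, hM,
          ENNReal.toReal_ofReal (by positivity), hL2f, hL2g]

-- ======================= end auxiliary development =======================

/-- Theorem 1.3 of the paper in dimension 3. For a `C^{1,1}` hypersurface
measure `σ` on `ℝ³` and `Im λ > 0`, the restricted Green's function pairing satisfies
`|∬ G₀(λ,x,y) f(y) conj(g(x)) dσ dσ| ≤ C (2+(Im λ)²)^{−1/2} ‖f‖ ‖g‖`. -/
theorem greens_function_restriction_bound_large_Im_dim3
    (σ : Measure (EuclideanSpace ℝ (Fin 3)))
    (hσ : IsC11HypersurfaceMeasure (n := 2) σ) :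
    ∃ C > 0, ∀ lam : ℂ, 0 < lam.im →
      ∀ f g : EuclideanSpace ℝ (Fin 3) → ℂ, MemLp f 2 σ → MemLp g 2 σ →
        Integrable (greenIntegrand3 lam f g) (σ.prod σ) ∧
        ‖∫ p, greenIntegrand3 lam f g p ∂(σ.prod σ)‖ ≤
          C * (2 + lam.im ^ 2) ^ (-(1/2 : ℝ)) * L2norm σ f * L2norm σ g := by
  obtain ⟨Creg, hC, hfin, hball⟩ := hyp_ball_bound hσ
  haveI : IsFiniteMeasure σ := ⟨hfin⟩
  have hS0 : (0:ℝ) ≤ (σ Set.univ).toReal := ENNReal.toReal_nonneg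
  refine ⟨Real.sqrt 3 * (2 * Creg + (σ Set.univ).toReal + 1), ?_, ?_⟩
  · have h3 : (0:ℝ) < Real.sqrt 3 := Real.sqrt_pos.2 (by norm_num)
    nlinarith
  · intro lam hlam f g hf hg
    exact main_bound σ hC hball lam hlam f g hf hg

end
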